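/- If h : ℝ^d → ℝ is L-Lipschitz, then the gradient of its uniform smoothing ĥ_δ is (√d·L/δ)-Lipschitz, i.e., ĥ_δ is (√d·L/δ)-smooth. -/

import Mathlib

open MeasureTheory Metric Real

lemma gamma_key (n : ℕ) :
    Real.sqrt (n+1) * Real.Gamma ((n+1)/2) ≤ Real.sqrt π * Real.Gamma ((n+2)/2) := by
  induction n using Nat.strong_induction_on with
  | _ n ih =>
    match n with
    | 0 =>
      have : ((0:ℕ):ℝ) = 0 := by norm_num
      rw [this]
      norm_num [Real.Gamma_one]
      rw [show (1:ℝ)/2 = 2⁻¹ by norm_num] at *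
      exact le_of_eq (by rw [show (2:ℝ)⁻¹ = 1/2 by norm_num, Real.Gamma_one_half_eq])
    | 1 =>
      have c1 : ((1:ℕ):ℝ) = 1 := by norm_num
      rw [c1]
      have h32 : Real.Gamma ((1+2)/2) = Real.sqrt π / 2 := by
        rw [show ((1:ℝ)+2)/2 = 1/2 + 1 by norm_num, Real.Gamma_add_one (by norm_num),
          Real.Gamma_one_half_eq]
        ring
      rw [h32, show ((1:ℝ)+1)/2 = 1 by norm_num, Real.Gamma_one,
        show Real.sqrt π * (Real.sqrt π / 2) = Real.sqrt π * Real.sqrt π / 2 by ring,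
        Real.mul_self_sqrt Real.pi_nonneg]
      have hs2 : Real.sqrt (1+1) ≤ 3/2 := by
        calc Real.sqrt (1+1) ≤ Real.sqrt ((3/2)^2) :=
              Real.sqrt_le_sqrt (by norm_num)
          _ = 3/2 := Real.sqrt_sq (by norm_num)
      nlinarith [Real.pi_gt_three]
    | (m+2) =>
      have IH := ih m (by omega)
      have cm : ((m+2:ℕ):ℝ) = (m:ℝ) + 2 := by push_cast; ring
      rw [cm]
      have e1 : ((m:ℝ)+2+1)/2 = ((m:ℝ)+1)/2 + 1 := by ring
      have e2 : ((m:ℝ)+2+2)/2 = ((m:ℝ)+2)/2 + 1 := by ring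
      rw [e1, e2, Real.Gamma_add_one (by positivity), Real.Gamma_add_one (by positivity)]
      have hΓ1 : 0 < Real.Gamma (((m:ℝ)+1)/2) := Real.Gamma_pos_of_pos (by positivity)
      have hΓ2 : 0 < Real.Gamma (((m:ℝ)+2)/2) := Real.Gamma_pos_of_pos (by positivity)
      -- key scalar inequality: √(m+3) * (m+1) ≤ √(m+1) * (m+2)
      have hsc : Real.sqrt ((m:ℝ)+2+1) * (((m:ℝ)+1)) ≤ Real.sqrt ((m:ℝ)+1) * ((m:ℝ)+2) := by
        have h1 : Real.sqrt ((m:ℝ)+2+1) * ((m:ℝ)+1) = Real.sqrt (((m:ℝ)+2+1) * ((m:ℝ)+1)^2) := by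
          rw [Real.sqrt_mul (by positivity), Real.sqrt_sq (by positivity)]
        have h2 : Real.sqrt ((m:ℝ)+1) * ((m:ℝ)+2) = Real.sqrt (((m:ℝ)+1) * ((m:ℝ)+2)^2) := by
          rw [Real.sqrt_mul (by positivity), Real.sqrt_sq (by positivity)]
        rw [h1, h2]
        apply Real.sqrt_le_sqrt
        nlinarith
      calc Real.sqrt ((m:ℝ)+2+1) * (((m:ℝ)+1)/2 * Real.Gamma (((m:ℝ)+1)/2))
          = (Real.sqrt ((m:ℝ)+2+1) * ((m:ℝ)+1)) * (Real.Gamma (((m:ℝ)+1)/2) / 2) := by ring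
        _ ≤ (Real.sqrt ((m:ℝ)+1) * ((m:ℝ)+2)) * (Real.Gamma (((m:ℝ)+1)/2) / 2) := by
            apply mul_le_mul_of_nonneg_right hsc (by positivity)
        _ = (((m:ℝ)+2)/2) * (Real.sqrt ((m:ℝ)+1) * Real.Gamma (((m:ℝ)+1)/2)) := by ring
        _ ≤ (((m:ℝ)+2)/2) * (Real.sqrt π * Real.Gamma (((m:ℝ)+2)/2)) := by
            apply mul_le_mul_of_nonneg_left IH (by positivity)
        _ = Real.sqrt π * (((m:ℝ)+2)/2 * Real.Gamma (((m:ℝ)+2)/2)) := by ring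

lemma two_ball_ratio (n : ℕ) :
    2 * (Real.sqrt π ^ n / Real.Gamma ((n:ℝ)/2+1)) ≤
      Real.sqrt ((n:ℝ)+1) * (Real.sqrt π ^ (n+1) / Real.Gamma (((n:ℝ)+1)/2+1)) := by
  have key := gamma_key n
  rw [show ((n:ℝ)+2)/2 = (n:ℝ)/2+1 by ring] at key
  have ha : 0 < Real.Gamma ((n:ℝ)/2+1) := Real.Gamma_pos_of_pos (by positivity)
  have hg1 : 0 < Real.Gamma (((n:ℝ)+1)/2) := Real.Gamma_pos_of_pos (by positivity)
  have hb : Real.Gamma (((n:ℝ)+1)/2+1) = ((n:ℝ)+1)/2 * Real.Gamma (((n:ℝ)+1)/2) :=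
    Real.Gamma_add_one (by positivity)
  have hbpos : 0 < Real.Gamma (((n:ℝ)+1)/2+1) := by rw [hb]; positivity
  rw [mul_div_assoc', mul_div_assoc', div_le_div_iff₀ ha hbpos, hb, pow_succ]
  have hs : Real.sqrt ((n:ℝ)+1) * Real.sqrt ((n:ℝ)+1) = (n:ℝ)+1 :=
    Real.mul_self_sqrt (by positivity)
  have hπn : (0:ℝ) ≤ Real.sqrt π ^ n := by positivity
  have hsn : (0:ℝ) ≤ Real.sqrt ((n:ℝ)+1) := Real.sqrt_nonneg _
  have step := mul_le_mul_of_nonneg_left key (mul_nonneg hsn hπn)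
  have e : (Real.sqrt ((n:ℝ)+1) * Real.sqrt π ^ n) * (Real.sqrt ((n:ℝ)+1) * Real.Gamma (((n:ℝ)+1)/2)) =
      2 * Real.sqrt π ^ n * (((n:ℝ)+1)/2 * Real.Gamma (((n:ℝ)+1)/2)) := by
    rw [show (Real.sqrt ((n:ℝ)+1) * Real.sqrt π ^ n) * (Real.sqrt ((n:ℝ)+1) * Real.Gamma (((n:ℝ)+1)/2))
      = (Real.sqrt ((n:ℝ)+1) * Real.sqrt ((n:ℝ)+1)) * (Real.sqrt π ^ n * Real.Gamma (((n:ℝ)+1)/2)) from by ring, hs]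
    ring
  rw [← e]
  calc (Real.sqrt ((n:ℝ)+1) * Real.sqrt π ^ n) * (Real.sqrt ((n:ℝ)+1) * Real.Gamma (((n:ℝ)+1)/2))
      ≤ (Real.sqrt ((n:ℝ)+1) * Real.sqrt π ^ n) * (Real.sqrt π * Real.Gamma ((n:ℝ)/2+1)) := step
    _ = Real.sqrt ((n:ℝ)+1) * (Real.sqrt π ^ n * Real.sqrt π) * Real.Gamma ((n:ℝ)/2+1) := by ring

lemma euclid_norm_le_iff {n : ℕ} {δ : ℝ} (hδ : 0 ≤ δ) (z : EuclideanSpace ℝ (Fin n)) :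
    ‖z‖ ≤ δ ↔ ∑ i, z i^2 ≤ δ^2 := by
  rw [EuclideanSpace.norm_eq]
  simp_rw [Real.norm_eq_abs, sq_abs]
  have Snn : (0:ℝ) ≤ ∑ i, z i^2 := by positivity
  constructor
  · intro hle
    calc (∑ i, z i^2) = Real.sqrt (∑ i, z i^2)^2 := (Real.sq_sqrt Snn).symm
      _ ≤ δ^2 := pow_le_pow_left₀ (Real.sqrt_nonneg _) hle 2
  · intro hle
    calc Real.sqrt (∑ i, z i^2) ≤ Real.sqrt (δ^2) := Real.sqrt_le_sqrt hle
      _ = δ := Real.sqrt_sq hδ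

lemma vol_pi_disk (n : ℕ) (δ : ℝ) (hδ : 0 < δ) :
    (volume : Measure (Fin n → ℝ)) {g | ∑ i, g i^2 ≤ δ^2} =
      ENNReal.ofReal ((Real.sqrt π ^ n / Real.Gamma ((n:ℝ)/2+1)) * δ^n) := by
  match n with
  | 0 =>
    have : {g : Fin 0 → ℝ | ∑ i, g i^2 ≤ δ^2} = Set.univ := by
      ext g; simp; positivity
    rw [this]
    rw [show (volume : Measure (Fin 0 → ℝ)) = Measure.pi (fun _ => volume) from rfl,
      Measure.pi_univ]
    simp [Real.Gamma_one]
  | (m+1) =>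
    have MP := EuclideanSpace.volume_preserving_symm_measurableEquiv_toLp (Fin (m+1))
    have hS : MeasurableSet {g : Fin (m+1) → ℝ | ∑ i, g i^2 ≤ δ^2} := by
      apply measurableSet_le _ measurable_const
      fun_prop
    rw [← MP.measure_preimage hS.nullMeasurableSet]
    have hpre : ((MeasurableEquiv.toLp 2 (Fin (m+1) → ℝ)).symm) ⁻¹' {g | ∑ i, g i^2 ≤ δ^2} =
        closedBall (0 : EuclideanSpace ℝ (Fin (m+1))) δ := by
      ext x
      simp only [Set.mem_preimage, Set.mem_setOf_eq, mem_closedBall_zero_iff]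
      rw [EuclideanSpace.norm_eq]
      simp_rw [Real.norm_eq_abs, sq_abs]
      have hx : ((MeasurableEquiv.toLp 2 (Fin (m+1) → ℝ)).symm) x = fun i => x i := rfl
      rw [hx]
      have Snn : (0:ℝ) ≤ ∑ i, x i^2 := by positivity
      constructor
      · intro hle
        calc Real.sqrt (∑ i, x i^2) ≤ Real.sqrt (δ^2) := Real.sqrt_le_sqrt hle
          _ = δ := Real.sqrt_sq hδ.le
      · intro hle
        calc (∑ i, x i^2) = Real.sqrt (∑ i, x i^2)^2 := (Real.sq_sqrt Snn).symm
          _ ≤ δ^2 := pow_le_pow_left₀ (Real.sqrt_nonneg _) hle 2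
    rw [hpre, EuclideanSpace.volume_closedBall]
    rw [Fintype.card_fin, ← ENNReal.ofReal_pow hδ.le, ← ENNReal.ofReal_mul (by positivity)]
    congr 1
    ring

lemma ball_diff_le (n : ℕ) (δ : ℝ) (hδ : 0 < δ) (w : EuclideanSpace ℝ (Fin (n+1))) :
    volume (closedBall (0 : EuclideanSpace ℝ (Fin (n+1))) δ \ closedBall w δ) ≤
      ENNReal.ofReal ‖w‖ * ENNReal.ofReal ((Real.sqrt π ^ n / Real.Gamma ((n:ℝ)/2+1)) * δ^n) := by
  rcases eq_or_ne w 0 with rfl | hw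
  · simp
  set t : ℝ := ‖w‖ with ht
  have htpos : 0 < t := norm_pos_iff.mpr hw
  -- orthonormal basis with b 0 = e := ‖w‖⁻¹ • w
  set e : EuclideanSpace ℝ (Fin (n+1)) := (‖w‖⁻¹ : ℝ) • w with he
  have hecard : Module.finrank ℝ (EuclideanSpace ℝ (Fin (n+1))) = Fintype.card (Fin (n+1)) := by
    simp [finrank_euclideanSpace]
  have heon : Orthonormal ℝ (({0} : Set (Fin (n+1))).restrict (fun _ => e)) := by
    constructor
    · intro i
      exact norm_smul_inv_norm hw
    · intro i j hij
      exact absurd (Subsingleton.elim i j) hij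
  obtain ⟨b, hb⟩ := heon.exists_orthonormalBasis_extension_of_card_eq hecard
  have hb0 : b 0 = e := hb 0 rfl
  have MP1 := b.measurePreserving_repr
  set w' : EuclideanSpace ℝ (Fin (n+1)) := b.repr w with hw'
  have hw'c : ∀ j, w' j = if j = 0 then t else 0 := by
    intro j
    have : w = t • e := by
      rw [he, smul_smul, ht, mul_inv_cancel₀ (norm_ne_zero_iff.mpr hw), one_smul]
    rw [hw', this, _root_.map_smul, ← hb0, b.repr_self]
    rcases eq_or_ne j 0 with rfl | hj
    · simp [EuclideanSpace.single_apply]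
    · simp [EuclideanSpace.single_apply, hj]
  -- the target set in ℝ × (Fin n → ℝ)
  set S₂ : Set (ℝ × (Fin n → ℝ)) :=
    {p | p.1^2 + ∑ i, p.2 i^2 ≤ δ^2 ∧ δ^2 < (p.1 - t)^2 + ∑ i, p.2 i^2} with hS₂
  have hS₂meas : MeasurableSet S₂ := by
    have m1 : Measurable fun p : ℝ × (Fin n → ℝ) => p.1^2 + ∑ i, p.2 i^2 := by fun_prop
    have m2 : Measurable fun p : ℝ × (Fin n → ℝ) => (p.1-t)^2 + ∑ i, p.2 i^2 := by fun_prop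
    rw [hS₂, Set.setOf_and]
    exact (measurableSet_le m1 measurable_const).inter (measurableSet_lt measurable_const m2)
  have MP2 := (MeasureTheory.volume_preserving_piFinSuccAbove (fun _ : Fin (n+1) => ℝ) 0).comp
    (EuclideanSpace.volume_preserving_symm_measurableEquiv_toLp (Fin (n+1)))
  -- identify preimages
  have hkey : closedBall (0 : EuclideanSpace ℝ (Fin (n+1))) δ \ closedBall w δ =
      ⇑b.repr ⁻¹' (⇑(MeasurableEquiv.piFinSuccAbove (fun _ : Fin (n+1) => ℝ) 0) ∘
        ⇑((MeasurableEquiv.toLp 2 (Fin (n+1) → ℝ)).symm) ⁻¹' S₂) := by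
    ext x
    have hΦ : (MeasurableEquiv.piFinSuccAbove (fun _ : Fin (n+1) => ℝ) 0)
        (((MeasurableEquiv.toLp 2 (Fin (n+1) → ℝ)).symm) (b.repr x)) =
        (b.repr x 0, fun j : Fin n => b.repr x j.succ) := rfl
    simp only [Set.mem_diff, Set.mem_preimage, Function.comp_apply, hΦ, hS₂, Set.mem_setOf_eq]
    have h1 : x ∈ closedBall (0 : EuclideanSpace ℝ (Fin (n+1))) δ ↔
        (b.repr x 0)^2 + ∑ j : Fin n, (b.repr x j.succ)^2 ≤ δ^2 := by
      rw [mem_closedBall_zero_iff, ← b.repr.norm_map x, euclid_norm_le_iff hδ.le,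
        Fin.sum_univ_succ]
    have h2 : x ∈ closedBall w δ ↔
        (b.repr x 0 - t)^2 + ∑ j : Fin n, (b.repr x j.succ)^2 ≤ δ^2 := by
      rw [mem_closedBall_iff_norm, ← b.repr.norm_map (x - w), euclid_norm_le_iff hδ.le,
        Fin.sum_univ_succ, map_sub]
      have c0 : (b.repr x - b.repr w) 0 = b.repr x 0 - t := by
        have := hw'c 0
        simp only [if_pos rfl] at this
        simp [PiLp.sub_apply, ← hw', this]
      have cj : ∀ j : Fin n, (b.repr x - b.repr w) j.succ = b.repr x j.succ := by
        intro j
        have := hw'c j.succ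
        rw [if_neg (Fin.succ_ne_zero j)] at this
        simp [PiLp.sub_apply, ← hw', this]
      rw [c0]
      simp_rw [cj]
    rw [h1, h2]
    exact and_congr Iff.rfl not_le
  rw [hkey, MP1.measure_preimage, MP2.measure_preimage hS₂meas.nullMeasurableSet]
  swap
  · exact (hS₂meas.preimage ((MeasurableEquiv.piFinSuccAbove (fun _ : Fin (n+1) => ℝ) 0).measurable.comp
      ((MeasurableEquiv.toLp 2 (Fin (n+1) → ℝ)).symm).measurable)).nullMeasurableSet
  -- slice bound
  rw [Measure.volume_eq_prod, Measure.prod_apply_symm hS₂meas]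
  set T : Set (Fin n → ℝ) := {g | ∑ i, g i^2 ≤ δ^2} with hT
  have hTmeas : MeasurableSet T := measurableSet_le (by fun_prop) measurable_const
  have hslice : ∀ g : Fin n → ℝ,
      volume ((fun a : ℝ => (a, g)) ⁻¹' S₂) ≤ T.indicator (fun _ => ENNReal.ofReal t) g := by
    intro g
    by_cases hg : g ∈ T
    · rw [Set.indicator_of_mem hg]
      set r : ℝ := Real.sqrt (δ^2 - ∑ i, g i^2) with hr
      have hρ : (0:ℝ) ≤ δ^2 - ∑ i, g i^2 := by
        have : ∑ i, g i^2 ≤ δ^2 := hg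
        linarith
      have hrnn : 0 ≤ r := Real.sqrt_nonneg _
      have hr2 : r^2 = δ^2 - ∑ i, g i^2 := Real.sq_sqrt hρ
      have hsub : ((fun a : ℝ => (a, g)) ⁻¹' S₂) ⊆ Set.Ico (-r) (-r + t) := by
        intro a ha
        simp only [hS₂, Set.mem_preimage, Set.mem_setOf_eq] at ha
        obtain ⟨ha1, ha2⟩ := ha
        have ha1' : a^2 ≤ r^2 := by rw [hr2]; linarith
        have hge : -r ≤ a := by nlinarith
        have hle : a ≤ r := by nlinarith
        refine ⟨hge, ?_⟩
        by_contra hc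
        push_neg at hc
        have h1 : -r ≤ a - t := by linarith
        have h2 : a - t ≤ r := by linarith
        have := sq_le_sq' h1 h2
        rw [hr2] at this
        linarith
      calc volume ((fun a : ℝ => (a, g)) ⁻¹' S₂) ≤ volume (Set.Ico (-r) (-r+t)) :=
            measure_mono hsub
        _ = ENNReal.ofReal (-r + t - (-r)) := Real.volume_Ico
        _ = ENNReal.ofReal t := by norm_num
    · rw [Set.indicator_of_notMem hg]
      have hempty : ((fun a : ℝ => (a, g)) ⁻¹' S₂) = ∅ := by
        rw [Set.eq_empty_iff_forall_notMem]
        intro a ha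
        simp only [hS₂, Set.mem_preimage, Set.mem_setOf_eq] at ha
        have hgT : ¬ (∑ i, g i^2 ≤ δ^2) := hg
        nlinarith [ha.1, sq_nonneg a]
      rw [hempty, measure_empty]
  calc ∫⁻ g, volume ((fun a : ℝ => (a, g)) ⁻¹' S₂) ∂volume
      ≤ ∫⁻ g, T.indicator (fun _ => ENNReal.ofReal t) g ∂volume := lintegral_mono hslice
    _ = ENNReal.ofReal t * volume T := lintegral_indicator_const hTmeas _
    _ = ENNReal.ofReal t * ENNReal.ofReal ((Real.sqrt π ^ n / Real.Gamma ((n:ℝ)/2+1)) * δ^n) := by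
        rw [hT, vol_pi_disk n δ hδ]

/-- The uniform probability measure on the closed unit Euclidean ball in `ℝ^d`. -/
noncomputable def unifBall (d : ℕ) : Measure (EuclideanSpace ℝ (Fin d)) :=
  (volume (closedBall (0 : EuclideanSpace ℝ (Fin d)) 1))⁻¹ •
    volume.restrict (closedBall (0 : EuclideanSpace ℝ (Fin d)) 1)

set_option maxHeartbeats 2000000 in
/-- If `h : ℝ^d → ℝ` is `L`-Lipschitz, then its uniform smoothing `ĥ_δ` is differentiable
and `(√d·L/δ)`-smooth, i.e. its gradient is `(√d·L/δ)`-Lipschitz. -/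
theorem uniformSmoothing_smooth (d : ℕ) (L δ : ℝ) (hL : 0 ≤ L) (hδ : 0 < δ)
    (h : EuclideanSpace ℝ (Fin d) → ℝ)
    (hlip : ∀ x y, |h x - h y| ≤ L * ‖x - y‖) :
    (∀ x, DifferentiableAt ℝ (fun x => ∫ v, h (x + δ • v) ∂(unifBall d)) x) ∧
      ∀ x y : EuclideanSpace ℝ (Fin d),
        ‖gradient (fun x => ∫ v, h (x + δ • v) ∂(unifBall d)) x -
            gradient (fun x => ∫ v, h (x + δ • v) ∂(unifBall d)) y‖ ≤
          Real.sqrt d * L / δ * ‖x - y‖ := by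
  classical
  have hδ' : δ ≠ 0 := hδ.ne'
  set B : Set (EuclideanSpace ℝ (Fin d)) := closedBall 0 1 with hB
  have hBpos : 0 < volume B := measure_closedBall_pos volume 0 one_pos
  have hBfin : volume B < ⊤ := measure_closedBall_lt_top
  have hμdef : unifBall d = (volume B)⁻¹ • volume.restrict B := rfl
  have hcinv_ne_top : (volume B)⁻¹ ≠ ⊤ := ENNReal.inv_ne_top.mpr hBpos.ne'
  haveI hprob : IsProbabilityMeasure (unifBall d) := by
    constructor
    rw [hμdef, Measure.smul_apply, Measure.restrict_apply_univ, smul_eq_mul]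
    exact ENNReal.inv_mul_cancel hBpos.ne' hBfin.ne
  have hlipW : LipschitzWith L.toNNReal h := by
    apply LipschitzWith.of_dist_le_mul
    intro a b
    rw [Real.dist_eq, dist_eq_norm, Real.coe_toNNReal L hL]
    exact hlip a b
  have hcont : Continuous h := hlipW.continuous
  have hgmeas : Measurable (fderiv ℝ h) := measurable_fderiv ℝ h
  have hgb : ∀ u, ‖fderiv ℝ h u‖ ≤ L := by
    intro u
    have := norm_fderiv_le_of_lipschitz ℝ hlipW (x₀ := u)
    rwa [Real.coe_toNNReal L hL] at this
  -- a.e. differentiability pullback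
  have hae : ∀ z : EuclideanSpace ℝ (Fin d), ∀ᵐ v ∂(unifBall d),
      DifferentiableAt ℝ h (z + δ • v) := by
    intro z
    have h0 : ∀ᵐ u ∂(volume : Measure (EuclideanSpace ℝ (Fin d))), DifferentiableAt ℝ h u :=
      hlipW.ae_differentiableAt
    have h1 : volume {u : EuclideanSpace ℝ (Fin d) | ¬ DifferentiableAt ℝ h u} = 0 :=
      ae_iff.mp h0
    have h2 : ∀ᵐ v ∂(volume : Measure (EuclideanSpace ℝ (Fin d))),
        DifferentiableAt ℝ h (z + δ • v) := by
      rw [ae_iff]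
      have hset : {v : EuclideanSpace ℝ (Fin d) | ¬ DifferentiableAt ℝ h (z + δ • v)} =
          (fun v : EuclideanSpace ℝ (Fin d) => δ • v) ⁻¹'
            ((fun u => z + u) ⁻¹' {u | ¬ DifferentiableAt ℝ h u}) := rfl
      rw [hset, Measure.addHaar_preimage_smul volume hδ']
      have hmeasset : MeasurableSet {u : EuclideanSpace ℝ (Fin d) | ¬ DifferentiableAt ℝ h u} := by
        have := measurableSet_of_differentiableAt ℝ h (F := ℝ)
        exact this.compl
      have hz : volume ((fun u : EuclideanSpace ℝ (Fin d) => z + u) ⁻¹'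
          {u | ¬ DifferentiableAt ℝ h u}) = 0 := by
        have hmap := MeasureTheory.map_add_left_eq_self
          (volume : Measure (EuclideanSpace ℝ (Fin d))) z
        calc volume ((fun u : EuclideanSpace ℝ (Fin d) => z + u) ⁻¹'
              {u | ¬ DifferentiableAt ℝ h u})
            = (Measure.map (fun u : EuclideanSpace ℝ (Fin d) => z + u) volume)
                {u | ¬ DifferentiableAt ℝ h u} :=
              (Measure.map_apply (measurable_const_add z) hmeasset).symm
          _ = 0 := by rw [hmap, h1]
      rw [hz, mul_zero]
    rw [hμdef]
    exact Measure.ae_smul_measure (ae_restrict_of_ae h2) _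
  -- differentiability with explicit derivative
  have hA : ∀ x₀, HasFDerivAt (fun x => ∫ v, h (x + δ • v) ∂(unifBall d))
      (∫ v, fderiv ℝ h (x₀ + δ • v) ∂(unifBall d)) x₀ := by
    intro x₀
    have hcont' : ∀ x, Continuous fun v : EuclideanSpace ℝ (Fin d) => h (x + δ • v) :=
      fun x => hcont.comp (continuous_const.add (continuous_id.const_smul δ))
    have hF_meas : ∀ᶠ x in nhds x₀, AEStronglyMeasurable
        (fun v : EuclideanSpace ℝ (Fin d) => h (x + δ • v)) (unifBall d) :=
      Filter.Eventually.of_forall fun x => (hcont' x).aestronglyMeasurable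
    have hF_int : Integrable (fun v => h (x₀ + δ • v)) (unifBall d) := by
      rw [hμdef]
      exact (((hcont' x₀).continuousOn).integrableOn_compact
        (isCompact_closedBall 0 1)).smul_measure hcinv_ne_top
    have hF'_meas : AEStronglyMeasurable
        (fun v => fderiv ℝ h (x₀ + δ • v)) (unifBall d) :=
      (hgmeas.comp ((measurable_id.const_smul δ).const_add x₀)).aestronglyMeasurable
    have h_lip : ∀ᵐ v ∂(unifBall d), LipschitzOnWith (Real.nnabs L)
        (fun x => h (x + δ • v)) (ball x₀ 1) := by
      apply Filter.Eventually.of_forall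
      intro v
      apply LipschitzWith.lipschitzOnWith
      apply LipschitzWith.of_dist_le_mul
      intro a b
      rw [Real.dist_eq, dist_eq_norm]
      have heq : (a + δ • v) - (b + δ • v) = a - b := by abel
      calc |h (a + δ • v) - h (b + δ • v)| ≤ L * ‖(a + δ • v) - (b + δ • v)‖ := hlip _ _
        _ = (Real.nnabs L : ℝ) * ‖a - b‖ := by
            rw [heq, Real.coe_nnabs, abs_of_nonneg hL]
    have bound_int : Integrable (fun _ : EuclideanSpace ℝ (Fin d) => L) (unifBall d) :=
      integrable_const L
    have h_diff : ∀ᵐ v ∂(unifBall d), HasFDerivAt (fun x => h (x + δ • v))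
        (fderiv ℝ h (x₀ + δ • v)) x₀ := by
      filter_upwards [hae x₀] with v hv
      have ht : HasFDerivAt (fun x : EuclideanSpace ℝ (Fin d) => x + δ • v)
          (ContinuousLinearMap.id ℝ _) x₀ := (hasFDerivAt_id x₀).add_const _
      have hc := (hv.hasFDerivAt).comp x₀ ht
      rwa [ContinuousLinearMap.comp_id] at hc
    exact (hasFDerivAt_integral_of_dominated_loc_of_lip (ball_mem_nhds x₀ one_pos) hF_meas hF_int hF'_meas
      h_lip bound_int h_diff).2
  refine ⟨fun x => (hA x).differentiableAt, ?_⟩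
  intro x y
  have hgrad : ∀ z, gradient (fun x => ∫ v, h (x + δ • v) ∂(unifBall d)) z =
      (InnerProductSpace.toDual ℝ _).symm (∫ v, fderiv ℝ h (z + δ • v) ∂(unifBall d)) := by
    intro z
    exact (hasFDerivAt_iff_hasGradientAt.mp (hA z)).gradient
  rw [hgrad x, hgrad y, ← map_sub, LinearIsometryEquiv.norm_map]
  rcases eq_or_ne x y with rfl | hxy
  · simp only [sub_self, norm_zero, mul_zero]
    positivity
  obtain ⟨n, rfl⟩ : ∃ n, d = n + 1 := by
    cases d with
    | zero => exact absurd (Subsingleton.elim x y) hxy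
    | succ n => exact ⟨n, rfl⟩
  -- change of variables: the averaged gradient over shifted balls
  have hInt : ∀ z : EuclideanSpace ℝ (Fin (n+1)),
      IntegrableOn (fderiv ℝ h) (closedBall z δ) volume :=
    fun z => Measure.integrableOn_of_bounded measure_closedBall_lt_top.ne
      hgmeas.aestronglyMeasurable (ae_of_all _ hgb)
  have hmap : ∀ z : EuclideanSpace ℝ (Fin (n+1)),
      Measure.map (fun v => z + δ • v) (volume.restrict B) =
        (ENNReal.ofReal ((δ ^ (n+1))⁻¹)) • volume.restrict (closedBall z δ) := by
    intro z
    have hpre : (fun v : EuclideanSpace ℝ (Fin (n+1)) => z + δ • v) ⁻¹' closedBall z δ = B := by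
      ext v
      simp only [Set.mem_preimage, hB, mem_closedBall, dist_eq_norm]
      rw [add_sub_cancel_left, sub_zero, norm_smul, Real.norm_eq_abs, abs_of_pos hδ]
      exact mul_le_iff_le_one_right hδ
    have hmeas1 : Measurable fun v : EuclideanSpace ℝ (Fin (n+1)) => δ • v :=
      measurable_id.const_smul δ
    have hmeas2 : Measurable fun u : EuclideanSpace ℝ (Fin (n+1)) => z + u :=
      measurable_const_add z
    have hcomp : (fun v : EuclideanSpace ℝ (Fin (n+1)) => z + δ • v) =
        (fun u => z + u) ∘ (fun v => δ • v) := rfl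
    rw [← hpre, ← Measure.restrict_map
      (show Measurable fun v : EuclideanSpace ℝ (Fin (n+1)) => z + δ • v from hmeas2.comp hmeas1)
      measurableSet_closedBall]
    congr 1
    rw [hcomp, ← Measure.map_map hmeas2 hmeas1, Measure.map_addHaar_smul volume hδ',
      Measure.map_smul, MeasureTheory.map_add_left_eq_self, finrank_euclideanSpace_fin,
      abs_of_pos (by positivity : (0:ℝ) < (δ ^ (n+1))⁻¹), Measure.restrict_smul]
  have hGz : ∀ z : EuclideanSpace ℝ (Fin (n+1)),
      (∫ v, fderiv ℝ h (z + δ • v) ∂(unifBall (n+1))) =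
        ((volume B).toReal⁻¹ * (δ ^ (n+1))⁻¹) • ∫ u in closedBall z δ, fderiv ℝ h u := by
    intro z
    rw [hμdef, integral_smul_measure]
    have hTae : AEMeasurable (fun v : EuclideanSpace ℝ (Fin (n+1)) => z + δ • v)
        (volume.restrict B) :=
      ((measurable_id.const_smul δ).const_add z).aemeasurable
    have hgae : AEStronglyMeasurable (fderiv ℝ h)
        (Measure.map (fun v : EuclideanSpace ℝ (Fin (n+1)) => z + δ • v) (volume.restrict B)) :=
      hgmeas.aestronglyMeasurable
    rw [← integral_map hTae hgae, hmap z, integral_smul_measure, smul_smul,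
      ENNReal.toReal_ofReal (by positivity), ENNReal.toReal_inv]
  -- the volume of the ball difference
  have hΓpos : 0 < Real.Gamma ((n:ℝ)/2+1) := Real.Gamma_pos_of_pos (by positivity)
  set V0 : ℝ := Real.sqrt π ^ n / Real.Gamma ((n:ℝ)/2+1) with hV0
  have hV0nn : 0 ≤ V0 * δ^n := by
    apply mul_nonneg (div_nonneg (by positivity) hΓpos.le) (by positivity)
  have hdiffvol : ∀ z z' : EuclideanSpace ℝ (Fin (n+1)),
      (volume (closedBall z δ \ closedBall z' δ)).toReal ≤ ‖z - z'‖ * (V0 * δ^n) := by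
    intro z z'
    have htrans : volume (closedBall z δ \ closedBall z' δ) =
        volume (closedBall (0 : EuclideanSpace ℝ (Fin (n+1))) δ \ closedBall (z' - z) δ) := by
      have hp := measure_preimage_add (volume : Measure (EuclideanSpace ℝ (Fin (n+1)))) z
        (closedBall z δ \ closedBall z' δ)
      rw [← hp]
      congr 1
      ext v
      simp only [Set.mem_preimage, Set.mem_diff, mem_closedBall, dist_eq_norm]
      rw [add_sub_cancel_left, sub_zero, show z + v - z' = v - (z' - z) by abel]
    rw [htrans]
    have hbd := ball_diff_le n δ hδ (z' - z)
    rw [← ENNReal.ofReal_mul (norm_nonneg _)] at hbd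
    have h3 := ENNReal.toReal_le_of_le_ofReal (mul_nonneg (norm_nonneg _) hV0nn) hbd
    rwa [norm_sub_rev] at h3
  -- split the difference of set integrals
  have hsplit : (∫ u in closedBall x δ, fderiv ℝ h u) - ∫ u in closedBall y δ, fderiv ℝ h u =
      (∫ u in closedBall x δ \ closedBall y δ, fderiv ℝ h u) -
        ∫ u in closedBall y δ \ closedBall x δ, fderiv ℝ h u := by
    have hxs := integral_inter_add_diff (t := closedBall y δ) measurableSet_closedBall (hInt x)
    have hys := integral_inter_add_diff (t := closedBall x δ) measurableSet_closedBall (hInt y)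
    rw [← hxs, ← hys, Set.inter_comm]
    abel
  have hfin1 : volume (closedBall x δ \ closedBall y δ) < ⊤ :=
    lt_of_le_of_lt (measure_mono Set.diff_subset) measure_closedBall_lt_top
  have hfin2 : volume (closedBall y δ \ closedBall x δ) < ⊤ :=
    lt_of_le_of_lt (measure_mono Set.diff_subset) measure_closedBall_lt_top
  have hJ : ‖(∫ u in closedBall x δ, fderiv ℝ h u) - ∫ u in closedBall y δ, fderiv ℝ h u‖ ≤
      2 * (L * (‖x - y‖ * (V0 * δ^n))) := by
    rw [hsplit]
    have hb1 : ‖∫ u in closedBall x δ \ closedBall y δ, fderiv ℝ h u‖ ≤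
        L * (volume (closedBall x δ \ closedBall y δ)).toReal :=
      norm_setIntegral_le_of_norm_le_const hfin1 (fun u _ => hgb u)
    have hb2 : ‖∫ u in closedBall y δ \ closedBall x δ, fderiv ℝ h u‖ ≤
        L * (volume (closedBall y δ \ closedBall x δ)).toReal :=
      norm_setIntegral_le_of_norm_le_const hfin2 (fun u _ => hgb u)
    have hv1 := hdiffvol x y
    have hv2 := hdiffvol y x
    rw [norm_sub_rev] at hv2
    calc ‖(∫ u in closedBall x δ \ closedBall y δ, fderiv ℝ h u) -
          ∫ u in closedBall y δ \ closedBall x δ, fderiv ℝ h u‖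
        ≤ ‖∫ u in closedBall x δ \ closedBall y δ, fderiv ℝ h u‖ +
          ‖∫ u in closedBall y δ \ closedBall x δ, fderiv ℝ h u‖ := norm_sub_le _ _
      _ ≤ L * (volume (closedBall x δ \ closedBall y δ)).toReal +
          L * (volume (closedBall y δ \ closedBall x δ)).toReal := add_le_add hb1 hb2
      _ ≤ L * (‖x - y‖ * (V0 * δ^n)) + L * (‖x - y‖ * (V0 * δ^n)) :=
          add_le_add (mul_le_mul_of_nonneg_left hv1 hL) (mul_le_mul_of_nonneg_left hv2 hL)
      _ = 2 * (L * (‖x - y‖ * (V0 * δ^n))) := by ring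
  -- final assembly
  rw [hGz x, hGz y, ← smul_sub, norm_smul]
  set W : ℝ := (volume B).toReal with hWdef
  have hΓpos2 : 0 < Real.Gamma (((n:ℝ)+1)/2+1) := Real.Gamma_pos_of_pos (by positivity)
  have hWval : W = Real.sqrt π ^ (n+1) / Real.Gamma (((n:ℝ)+1)/2+1) := by
    rw [hWdef, hB, EuclideanSpace.volume_closedBall, Fintype.card_fin, ENNReal.ofReal_one,
      one_pow, one_mul, ENNReal.toReal_ofReal (div_nonneg (by positivity) ?_)]
    · push_cast
      ring_nf
    · push_cast
      exact hΓpos2.le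
  have hWpos : 0 < W := by
    rw [hWval]
    positivity
  have key := two_ball_ratio n
  rw [← hV0, ← hWval] at key
  have hκnn : (0:ℝ) ≤ W⁻¹ * (δ ^ (n+1))⁻¹ := by positivity
  calc |W⁻¹ * (δ ^ (n+1))⁻¹| *
        ‖(∫ u in closedBall x δ, fderiv ℝ h u) - ∫ u in closedBall y δ, fderiv ℝ h u‖
      ≤ (W⁻¹ * (δ ^ (n+1))⁻¹) * (2 * (L * (‖x - y‖ * (V0 * δ^n)))) := by
        rw [abs_of_nonneg hκnn]
        exact mul_le_mul_of_nonneg_left hJ hκnn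
    _ = (2 * V0) * (L * ‖x - y‖ / (W * δ)) := by
        rw [pow_succ]
        field_simp
    _ ≤ (Real.sqrt ((n:ℝ)+1) * W) * (L * ‖x - y‖ / (W * δ)) := by
        apply mul_le_mul_of_nonneg_right key (by positivity)
    _ = Real.sqrt (↑(n+1)) * L / δ * ‖x - y‖ := by
        push_cast
        field_simp
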